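/- For every natural number i, the depth-bounded sublattice L_i = { l ∈ L : D(l) ≤ i } of the symbolic lattice satisfies the ascending chain condition: there is no sequence c : ℕ → L such that for every n, D(c n) ≤ i, c n ⊑ c (n+1), and c n ≠ c (n+1). Equivalently, every ⊑-increasing sequence of elements of depth at most i is eventually constant. -/
import Mathlib


inductive SymExpr (P U B F : Type*) where
  | bot : SymExpr P U B F
  | top : SymExpr P U B F
  | prim : P → SymExpr P U B F
  | unop : U → SymExpr P U B F → SymExpr P U B F
  | binop : B → SymExpr P U B F → SymExpr P U B F → SymExpr P U B F
  | fn : F → List (SymExpr P U B F) → SymExpr P U B F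
  | phi : List (SymExpr P U B F) → SymExpr P U B F

namespace SymExpr

variable {P U B F : Type*}

/-- The partial order `⊑` on the symbolic lattice. -/
inductive Le : SymExpr P U B F → SymExpr P U B F → Prop where
  | bot (l) : Le .bot l
  | top (l) : Le l .top
  | prim (p : P) : Le (.prim p) (.prim p)
  | unop {l l'} (u : U) : Le l l' → Le (.unop u l) (.unop u l')
  | binop {l₁ l₂ l₁' l₂'} (b : B) : Le l₁ l₁' → Le l₂ l₂' →
      Le (.binop b l₁ l₂) (.binop b l₁' l₂')
  | fn {ls ls'} (f : F) : List.Forall₂ Le ls ls' → Le (.fn f ls) (.fn f ls')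
  | phi {ls ls'} : List.Forall₂ Le ls ls' → Le (.phi ls) (.phi ls')

attribute [local instance] Classical.propDecidable

mutual
noncomputable def join : SymExpr P U B F → SymExpr P U B F → SymExpr P U B F
  | .bot, l => l
  | l, .bot => l
  | .prim p, .prim p' => if p = p' then .prim p else .top
  | .unop u l, .unop u' l' => if u = u' then .unop u (join l l') else .top
  | .binop b l₁ l₂, .binop b' l₁' l₂' =>
      if b = b' then .binop b (join l₁ l₁') (join l₂ l₂') else .top
  | .fn f ls, .fn f' ls' =>
      if f = f' ∧ ls.length = ls'.length then .fn f (joinList ls ls') else .top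
  | .phi ls, .phi ls' =>
      if ls.length = ls'.length then .phi (joinList ls ls') else .top
  | _, _ => .top

noncomputable def joinList : List (SymExpr P U B F) → List (SymExpr P U B F) → List (SymExpr P U B F)
  | l :: ls, l' :: ls' => join l l' :: joinList ls ls'
  | _, _ => []
end

mutual
noncomputable def meet : SymExpr P U B F → SymExpr P U B F → SymExpr P U B F
  | .top, l => l
  | l, .top => l
  | .prim p, .prim p' => if p = p' then .prim p else .bot
  | .unop u l, .unop u' l' => if u = u' then .unop u (meet l l') else .bot
  | .binop b l₁ l₂, .binop b' l₁' l₂' =>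
      if b = b' then .binop b (meet l₁ l₁') (meet l₂ l₂') else .bot
  | .fn f ls, .fn f' ls' =>
      if f = f' ∧ ls.length = ls'.length then .fn f (meetList ls ls') else .bot
  | .phi ls, .phi ls' =>
      if ls.length = ls'.length then .phi (meetList ls ls') else .bot
  | _, _ => .bot

noncomputable def meetList : List (SymExpr P U B F) → List (SymExpr P U B F) → List (SymExpr P U B F)
  | l :: ls, l' :: ls' => meet l l' :: meetList ls ls'
  | _, _ => []
end

mutual
def depth : SymExpr P U B F → ℕ
  | .bot => 0
  | .top => 0
  | .prim _ => 0
  | .unop _ l => 1 + depth l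
  | .binop _ l₁ l₂ => 1 + max (depth l₁) (depth l₂)
  | .fn _ ls => 1 + depthList ls
  | .phi ls => 1 + depthList ls

def depthList : List (SymExpr P U B F) → ℕ
  | [] => 0
  | l :: ls => max (depth l) (depthList ls)
end

/-- The widening truncation `T_i`. -/
def trunc : ℕ → SymExpr P U B F → SymExpr P U B F
  | _, .bot => .bot
  | _, .top => .top
  | _, .prim p => .prim p
  | 0, .unop _ _ => .top
  | 0, .binop _ _ _ => .top
  | 0, .fn _ _ => .top
  | 0, .phi _ => .top
  | i + 1, .unop u l => .unop u (trunc i l)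
  | i + 1, .binop b l₁ l₂ => .binop b (trunc i l₁) (trunc i l₂)
  | i + 1, .fn f ls => .fn f (ls.map (fun l => trunc i l))
  | i + 1, .phi ls => .phi (ls.map (fun l => trunc i l))

end SymExpr

namespace SymExpr

variable {P U B F : Type*}

theorem aux_top_le {l : SymExpr P U B F} (h : Le .top l) : l = .top := by
  cases h <;> rfl

theorem aux_prim_le {p : P} {l : SymExpr P U B F} (h : Le (.prim p) l) :
    l = .top ∨ l = .prim p := by
  cases h with
  | top => exact Or.inl rfl
  | prim => exact Or.inr rfl

theorem aux_unop_le {u : U} {x m : SymExpr P U B F} (h : Le (.unop u x) m) :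
    m = .top ∨ ∃ y, m = .unop u y := by
  cases h with
  | top => exact Or.inl rfl
  | unop _ h => exact Or.inr ⟨_, rfl⟩

theorem aux_binop_le {b : B} {x₁ x₂ m : SymExpr P U B F} (h : Le (.binop b x₁ x₂) m) :
    m = .top ∨ ∃ y₁ y₂, m = .binop b y₁ y₂ := by
  cases h with
  | top => exact Or.inl rfl
  | binop _ h₁ h₂ => exact Or.inr ⟨_, _, rfl⟩

theorem aux_fn_le {f : F} {xs : List (SymExpr P U B F)} {m} (h : Le (.fn f xs) m) :
    m = .top ∨ ∃ ys, m = .fn f ys := by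
  cases h with
  | top => exact Or.inl rfl
  | fn _ h => exact Or.inr ⟨_, rfl⟩

theorem aux_phi_le {xs : List (SymExpr P U B F)} {m} (h : Le (.phi xs) m) :
    m = .top ∨ ∃ ys, m = .phi ys := by
  cases h with
  | top => exact Or.inl rfl
  | phi h => exact Or.inr ⟨_, rfl⟩

/-- Lists of a fixed length with componentwise ascending, depth-bounded entries are
eventually constant, assuming the corresponding fact for entries. -/
theorem aux_ec_list (i : ℕ)
    (hec : ∀ c : ℕ → SymExpr P U B F, (∀ n, depth (c n) ≤ i) →
      (∀ n, Le (c n) (c (n+1))) → ∃ N, ∀ m, N ≤ m → c m = c N) :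
    ∀ (k : ℕ) (L : ℕ → List (SymExpr P U B F)), (∀ n, (L n).length = k) →
      (∀ n, depthList (L n) ≤ i) → (∀ n, List.Forall₂ Le (L n) (L (n+1))) →
      ∃ N, ∀ m, N ≤ m → L m = L N := by
  intro k
  induction k with
  | zero =>
    intro L hlen _ _
    refine ⟨0, fun m _ => ?_⟩
    rw [List.length_eq_zero_iff.1 (hlen m), List.length_eq_zero_iff.1 (hlen 0)]
  | succ k IH =>
    intro L hlen hd hle
    have hsh : ∀ n, ∃ h t, L n = h :: t := by
      intro n
      cases hL : L n with
      | nil => exact absurd (hlen n) (by simp [hL])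
      | cons a l => exact ⟨a, l, rfl⟩
    choose hd' tl hht using hsh
    have hft : ∀ n, Le (hd' n) (hd' (n+1)) ∧ List.Forall₂ Le (tl n) (tl (n+1)) := by
      intro n
      have h := hle n
      rw [hht n, hht (n+1)] at h
      cases h with
      | cons h1 h2 => exact ⟨h1, h2⟩
    have hdep : ∀ n, depth (hd' n) ≤ i ∧ depthList (tl n) ≤ i := by
      intro n
      have h := hd n
      rw [hht n] at h
      simp only [depthList, Nat.max_le] at h
      exact h
    have hlen' : ∀ n, (tl n).length = k := by
      intro n
      have h := hlen n
      rw [hht n] at h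
      simpa using h
    obtain ⟨N₁, hN₁⟩ := hec hd' (fun n => (hdep n).1) (fun n => (hft n).1)
    obtain ⟨N₂, hN₂⟩ := IH tl hlen' (fun n => (hdep n).2) (fun n => (hft n).2)
    refine ⟨max N₁ N₂, fun m hm => ?_⟩
    rw [hht m, hht (max N₁ N₂)]
    rw [hN₁ m (le_trans (le_max_left _ _) hm), hN₁ (max N₁ N₂) (le_max_left _ _),
        hN₂ m (le_trans (le_max_right _ _) hm), hN₂ (max N₁ N₂) (le_max_right _ _)]

/-- Ascending depth-bounded chains are eventually constant. -/
theorem aux_ec : ∀ (i : ℕ) (c : ℕ → SymExpr P U B F), (∀ n, depth (c n) ≤ i) →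
    (∀ n, Le (c n) (c (n+1))) → ∃ N, ∀ m, N ≤ m → c m = c N := by
  intro i
  induction i using Nat.strong_induction_on with
  | _ i IH =>
  intro c hd hle
  by_cases hT : ∃ n, c n = .top
  · obtain ⟨n, hn⟩ := hT
    refine ⟨n, fun m hm => ?_⟩
    have htop : ∀ m', c (n + m') = .top := by
      intro m'
      induction m' with
      | zero => simpa using hn
      | succ m' ih =>
        have h := hle (n + m')
        rw [ih] at h
        exact aux_top_le h
    rw [hn]
    have := htop (m - n)
    rwa [show n + (m - n) = m by omega] at this
  push_neg at hT
  by_cases hB : ∀ n, c n = .bot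
  · exact ⟨0, fun m _ => by rw [hB m, hB 0]⟩
  push_neg at hB
  obtain ⟨n₁, hn₁⟩ := hB
  cases hc : c n₁ with
  | bot => exact absurd hc hn₁
  | top => exact absurd hc (hT n₁)
  | prim p =>
    refine ⟨n₁, fun m hm => ?_⟩
    have hp : ∀ m', c (n₁ + m') = .prim p := by
      intro m'
      induction m' with
      | zero => simpa using hc
      | succ m' ih =>
        have h := hle (n₁ + m')
        rw [ih] at h
        rcases aux_prim_le h with h | h
        · exact absurd h (hT _)
        · exact h
    rw [hc]
    have := hp (m - n₁)
    rwa [show n₁ + (m - n₁) = m by omega] at this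
  | unop u x =>
    have hsh : ∀ m', ∃ y, c (n₁ + m') = .unop u y := by
      intro m'
      induction m' with
      | zero => exact ⟨x, by simpa using hc⟩
      | succ m' ih =>
        obtain ⟨y, hy⟩ := ih
        have h := hle (n₁ + m')
        rw [hy] at h
        rcases aux_unop_le h with h | ⟨z, hz⟩
        · exact absurd h (hT _)
        · exact ⟨z, hz⟩
    choose g hg using hsh
    have hi : 1 ≤ i := by
      have h := hd n₁
      rw [hc] at h
      simp only [depth] at h
      omega
    have hgd : ∀ m', depth (g m') ≤ i - 1 := by
      intro m'
      have h := hd (n₁ + m')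
      rw [hg m'] at h
      simp only [depth] at h
      omega
    have hgle : ∀ m', Le (g m') (g (m' + 1)) := by
      intro m'
      have h := hle (n₁ + m')
      rw [hg m', show n₁ + m' + 1 = n₁ + (m' + 1) from rfl, hg (m' + 1)] at h
      cases h with
      | unop _ h => exact h
    obtain ⟨N, hN⟩ := IH (i - 1) (by omega) g hgd hgle
    refine ⟨n₁ + N, fun m hm => ?_⟩
    have h1 : c m = .unop u (g (m - n₁)) := by
      have := hg (m - n₁)
      rwa [show n₁ + (m - n₁) = m by omega] at this
    rw [h1, hg N, hN (m - n₁) (by omega)]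
  | binop b x₁ x₂ =>
    have hsh : ∀ m', ∃ y₁ y₂, c (n₁ + m') = .binop b y₁ y₂ := by
      intro m'
      induction m' with
      | zero => exact ⟨x₁, x₂, by simpa using hc⟩
      | succ m' ih =>
        obtain ⟨y₁, y₂, hy⟩ := ih
        have h := hle (n₁ + m')
        rw [hy] at h
        rcases aux_binop_le h with h | ⟨z₁, z₂, hz⟩
        · exact absurd h (hT _)
        · exact ⟨z₁, z₂, hz⟩
    choose g₁ g₂ hg using hsh
    have hi : 1 ≤ i := by
      have h := hd n₁
      rw [hc] at h
      simp only [depth] at h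
      omega
    have hgd : ∀ m', depth (g₁ m') ≤ i - 1 ∧ depth (g₂ m') ≤ i - 1 := by
      intro m'
      have h := hd (n₁ + m')
      rw [hg m'] at h
      simp only [depth] at h
      omega
    have hgle : ∀ m', Le (g₁ m') (g₁ (m' + 1)) ∧ Le (g₂ m') (g₂ (m' + 1)) := by
      intro m'
      have h := hle (n₁ + m')
      rw [hg m', show n₁ + m' + 1 = n₁ + (m' + 1) from rfl, hg (m' + 1)] at h
      cases h with
      | binop _ h₁ h₂ => exact ⟨h₁, h₂⟩
    obtain ⟨N₁, hN₁⟩ := IH (i - 1) (by omega) g₁ (fun n => (hgd n).1) (fun n => (hgle n).1)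
    obtain ⟨N₂, hN₂⟩ := IH (i - 1) (by omega) g₂ (fun n => (hgd n).2) (fun n => (hgle n).2)
    refine ⟨n₁ + max N₁ N₂, fun m hm => ?_⟩
    have h1 : c m = .binop b (g₁ (m - n₁)) (g₂ (m - n₁)) := by
      have := hg (m - n₁)
      rwa [show n₁ + (m - n₁) = m by omega] at this
    rw [h1, hg (max N₁ N₂),
        hN₁ (m - n₁) (by omega), hN₁ (max N₁ N₂) (le_max_left _ _),
        hN₂ (m - n₁) (by omega), hN₂ (max N₁ N₂) (le_max_right _ _)]
  | fn f ls =>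
    have hsh : ∀ m', ∃ ys, c (n₁ + m') = .fn f ys := by
      intro m'
      induction m' with
      | zero => exact ⟨ls, by simpa using hc⟩
      | succ m' ih =>
        obtain ⟨ys, hy⟩ := ih
        have h := hle (n₁ + m')
        rw [hy] at h
        rcases aux_fn_le h with h | ⟨zs, hz⟩
        · exact absurd h (hT _)
        · exact ⟨zs, hz⟩
    choose g hg using hsh
    have hi : 1 ≤ i := by
      have h := hd n₁
      rw [hc] at h
      simp only [depth] at h
      omega
    have hgd : ∀ m', depthList (g m') ≤ i - 1 := by
      intro m'
      have h := hd (n₁ + m')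
      rw [hg m'] at h
      simp only [depth] at h
      omega
    have hgf : ∀ m', List.Forall₂ Le (g m') (g (m' + 1)) := by
      intro m'
      have h := hle (n₁ + m')
      rw [hg m', show n₁ + m' + 1 = n₁ + (m' + 1) from rfl, hg (m' + 1)] at h
      cases h with
      | fn _ h => exact h
    have hlen : ∀ m', (g m').length = (g 0).length := by
      intro m'
      induction m' with
      | zero => rfl
      | succ m' ih => rw [← (hgf m').length_eq, ih]
    obtain ⟨N, hN⟩ := aux_ec_list (i - 1) (IH (i - 1) (by omega)) (g 0).length g hlen hgd hgf
    refine ⟨n₁ + N, fun m hm => ?_⟩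
    have h1 : c m = .fn f (g (m - n₁)) := by
      have := hg (m - n₁)
      rwa [show n₁ + (m - n₁) = m by omega] at this
    rw [h1, hg N, hN (m - n₁) (by omega)]
  | phi ls =>
    have hsh : ∀ m', ∃ ys, c (n₁ + m') = .phi ys := by
      intro m'
      induction m' with
      | zero => exact ⟨ls, by simpa using hc⟩
      | succ m' ih =>
        obtain ⟨ys, hy⟩ := ih
        have h := hle (n₁ + m')
        rw [hy] at h
        rcases aux_phi_le h with h | ⟨zs, hz⟩
        · exact absurd h (hT _)
        · exact ⟨zs, hz⟩
    choose g hg using hsh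
    have hi : 1 ≤ i := by
      have h := hd n₁
      rw [hc] at h
      simp only [depth] at h
      omega
    have hgd : ∀ m', depthList (g m') ≤ i - 1 := by
      intro m'
      have h := hd (n₁ + m')
      rw [hg m'] at h
      simp only [depth] at h
      omega
    have hgf : ∀ m', List.Forall₂ Le (g m') (g (m' + 1)) := by
      intro m'
      have h := hle (n₁ + m')
      rw [hg m', show n₁ + m' + 1 = n₁ + (m' + 1) from rfl, hg (m' + 1)] at h
      cases h with
      | phi h => exact h
    have hlen : ∀ m', (g m').length = (g 0).length := by
      intro m'
      induction m' with
      | zero => rfl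
      | succ m' ih => rw [← (hgf m').length_eq, ih]
    obtain ⟨N, hN⟩ := aux_ec_list (i - 1) (IH (i - 1) (by omega)) (g 0).length g hlen hgd hgf
    refine ⟨n₁ + N, fun m hm => ?_⟩
    have h1 : c m = .phi (g (m - n₁)) := by
      have := hg (m - n₁)
      rwa [show n₁ + (m - n₁) = m by omega] at this
    rw [h1, hg N, hN (m - n₁) (by omega)]

end SymExpr

/-- each depth-bounded sublattice satisfies the ascending chain
condition: there is no strictly ascending chain of elements of depth at most `i`. -/
theorem SymExpr.acc_depth_bounded {P U B F : Type*} (i : ℕ) :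
    ¬ ∃ c : ℕ → SymExpr P U B F,
        ∀ n : ℕ, (c n).depth ≤ i ∧ (c n).Le (c (n + 1)) ∧ c n ≠ c (n + 1) := by
  rintro ⟨c, hc⟩
  obtain ⟨N, hN⟩ := SymExpr.aux_ec i c (fun n => (hc n).1) (fun n => (hc n).2.1)
  exact (hc N).2.2 (hN (N + 1) (Nat.le_succ N)).symm
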